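/- Let H be a group that is δ-hyperbolic with respect to a finite generating set S, and let g ∈ H be an element of infinite order. There exists a constant μ ≥ 0, given by a computable function of δ, ♯S and |g|, such that for all natural numbers s, t one has |g^{s+t}| ≥ |g^s| + |g^t| − 2μ. -/

import Mathlib

variable {G : Type*} [Group G]

/-- Word length of `g` with respect to a generating set `S`: the least number of
letters from `S ∪ S⁻¹` whose product is `g`. -/
noncomputable def wlen (S : Set G) (g : G) : ℕ :=
  sInf {n : ℕ | ∃ L : List G, (∀ x ∈ L, x ∈ S ∨ x⁻¹ ∈ S) ∧ L.length = n ∧ L.prod = g}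

/-- A discrete geodesic from `a` to `b` in the Cayley graph of `G` w.r.t. `S`:
the sequence of vertices visited by a geodesic path. -/
def IsDGeodesic (S : Set G) (a b : G) (p : ℕ → G) : Prop :=
  p 0 = a ∧ p (wlen S (a⁻¹ * b)) = b ∧
    ∀ i ≤ wlen S (a⁻¹ * b), ∀ j ≤ wlen S (a⁻¹ * b),
      wlen S ((p i)⁻¹ * p j) = Nat.dist i j

/-- `G` is `δ`-hyperbolic with respect to `S`: every geodesic triangle in the
Cayley graph `Γ(G,S)` is `δ`-thin, rendered on the vertex set. -/
def GroupHyperbolic (S : Set G) (δ : ℝ) : Prop :=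
  ∀ a b c : G, ∀ p q : ℕ → G, IsDGeodesic S a b p → IsDGeodesic S a c q →
    ∀ i : ℕ,
      (i : ℝ) ≤ ((wlen S (a⁻¹ * b) : ℝ) + (wlen S (a⁻¹ * c) : ℝ)
          - (wlen S (b⁻¹ * c) : ℝ)) / 2 →
      (wlen S ((p i)⁻¹ * q i) : ℝ) ≤ δ

namespace Stmt7

/-- a legal word over the alphabet `S ∪ S⁻¹`. -/
def WOk (S : Set G) (L : List G) : Prop := ∀ x ∈ L, x ∈ S ∨ x⁻¹ ∈ S

lemma wok_nil (S : Set G) : WOk S ([] : List G) := by intro x hx; simp at hx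

lemma wok_append {S : Set G} {L1 L2 : List G} (h1 : WOk S L1) (h2 : WOk S L2) :
    WOk S (L1 ++ L2) := by
  intro x hx
  rcases List.mem_append.1 hx with h | h
  exacts [h1 x h, h2 x h]

lemma wlen_le_word {S : Set G} {L : List G} {h : G} (hL : WOk S L) (hp : L.prod = h) :
    wlen S h ≤ L.length :=
  Nat.sInf_le ⟨L, hL, rfl, hp⟩

lemma exists_word {S : Set G} (hS : Subgroup.closure S = ⊤) (h : G) :
    ∃ L : List G, WOk S L ∧ L.prod = h := by
  have hh : h ∈ Subgroup.closure S := by rw [hS]; trivial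
  induction hh using Subgroup.closure_induction with
  | mem x hx => exact ⟨[x], by intro z hz; simp at hz; subst hz; exact Or.inl hx, by simp⟩
  | one => exact ⟨[], wok_nil S, by simp⟩
  | mul x y hx hy ihx ihy =>
      obtain ⟨L1, h1, p1⟩ := ihx
      obtain ⟨L2, h2, p2⟩ := ihy
      exact ⟨L1 ++ L2, wok_append h1 h2, by simp [p1, p2]⟩
  | inv x hx ihx =>
      obtain ⟨L, h1, p1⟩ := ihx
      refine ⟨(L.map (fun z => z⁻¹)).reverse, ?_, ?_⟩
      · intro z hz
        simp only [List.mem_reverse, List.mem_map] at hz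
        obtain ⟨w, hw, rfl⟩ := hz
        rcases h1 w hw with h | h
        · exact Or.inr (by simpa using h)
        · exact Or.inl h
      · rw [← List.prod_inv_reverse, p1]

/-- there is a word of minimal length. -/
lemma exists_min_word {S : Set G} (hS : Subgroup.closure S = ⊤) (h : G) :
    ∃ L : List G, WOk S L ∧ L.length = wlen S h ∧ L.prod = h := by
  have hne : {n : ℕ | ∃ L : List G, WOk S L ∧ L.length = n ∧ L.prod = h}.Nonempty := by
    obtain ⟨L, h1, h2⟩ := exists_word hS h
    exact ⟨L.length, L, h1, rfl, h2⟩
  exact Nat.sInf_mem hne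

@[simp] lemma wlen_one (S : Set G) : wlen S (1 : G) = 0 :=
  Nat.le_zero.1 (by simpa using wlen_le_word (wok_nil S) (List.prod_nil))

lemma eq_one_of_wlen_eq_zero {S : Set G} (hS : Subgroup.closure S = ⊤) {h : G}
    (hz : wlen S h = 0) : h = 1 := by
  obtain ⟨L, _, hlen, hprod⟩ := exists_min_word hS h
  rw [hz, List.length_eq_zero_iff] at hlen
  rw [← hprod, hlen, List.prod_nil]

lemma wlen_mul_le {S : Set G} (hS : Subgroup.closure S = ⊤) (a b : G) :
    wlen S (a * b) ≤ wlen S a + wlen S b := by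
  obtain ⟨L1, h1, l1, p1⟩ := exists_min_word hS a
  obtain ⟨L2, h2, l2, p2⟩ := exists_min_word hS b
  have := wlen_le_word (wok_append h1 h2) (by simp [p1, p2] : (L1 ++ L2).prod = a * b)
  simpa [l1, l2] using this

lemma wlen_inv_le {S : Set G} (hS : Subgroup.closure S = ⊤) (a : G) :
    wlen S a⁻¹ ≤ wlen S a := by
  obtain ⟨L, h1, l1, p1⟩ := exists_min_word hS a
  have hok : WOk S (L.map (fun z => z⁻¹)).reverse := by
    intro z hz
    simp only [List.mem_reverse, List.mem_map] at hz
    obtain ⟨w, hw, rfl⟩ := hz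
    rcases h1 w hw with h | h
    · exact Or.inr (by simpa using h)
    · exact Or.inl h
  have hp : ((L.map (fun z => z⁻¹)).reverse).prod = a⁻¹ := by
    rw [← List.prod_inv_reverse, p1]
  have := wlen_le_word hok hp
  simpa [l1] using this

lemma wlen_inv {S : Set G} (hS : Subgroup.closure S = ⊤) (a : G) :
    wlen S a⁻¹ = wlen S a :=
  le_antisymm (wlen_inv_le hS a) (by simpa using wlen_inv_le hS a⁻¹)

lemma wlen_pow_le {S : Set G} (hS : Subgroup.closure S = ⊤) (g : G) (j : ℕ) :
    wlen S (g ^ j) ≤ j * wlen S g := by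
  induction j with
  | zero => simp
  | succ j ih =>
      calc wlen S (g ^ (j+1)) = wlen S (g ^ j * g) := by rw [pow_succ]
        _ ≤ wlen S (g ^ j) + wlen S g := wlen_mul_le hS _ _
        _ ≤ j * wlen S g + wlen S g := by omega
        _ = (j+1) * wlen S g := by ring

/-- "distance" triangle inequality in the form we use. -/
lemma wlen_triple {S : Set G} (hS : Subgroup.closure S = ⊤) (x y z : G) :
    wlen S (x⁻¹ * z) ≤ wlen S (x⁻¹ * y) + wlen S (y⁻¹ * z) := by
  have : x⁻¹ * z = (x⁻¹ * y) * (y⁻¹ * z) := by group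
  rw [this]; exact wlen_mul_le hS _ _

end Stmt7

namespace Stmt7

variable {G : Type*} [Group G]

/-- geodesics exist between any two points. -/
lemma exists_geodesic {S : Set G} (hS : Subgroup.closure S = ⊤) (a b : G) :
    ∃ p : ℕ → G, IsDGeodesic S a b p := by
  obtain ⟨L, hok, hlen, hprod⟩ := exists_min_word hS (a⁻¹ * b)
  refine ⟨fun i => a * (L.take i).prod, ?_, ?_, ?_⟩
  · simp
  · show a * (L.take (wlen S (a⁻¹ * b))).prod = b
    rw [← hlen, List.take_length, hprod]; group
  · -- distances
    have key : ∀ i j, i ≤ j → j ≤ wlen S (a⁻¹ * b) →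
        wlen S ((a * (L.take i).prod)⁻¹ * (a * (L.take j).prod)) = j - i := by
      intro i j hij hj
      have hjL : j ≤ L.length := by omega
      -- the element is the product of the segment
      set seg : List G := (L.take j).drop i with hseg
      have hdecomp : L.take j = L.take i ++ seg := by
        conv_lhs => rw [← List.take_append_drop i (L.take j)]
        rw [List.take_take, min_eq_left hij, hseg]
      have hel : (a * (L.take i).prod)⁻¹ * (a * (L.take j).prod) = seg.prod := by
        rw [hdecomp, List.prod_append]; group
      have hseglen : seg.length = j - i := by
        rw [hseg, List.length_drop, List.length_take]
        omega
      have hsegok : WOk S seg := by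
        intro x hx
        exact hok x (List.mem_of_mem_take (List.mem_of_mem_drop hx))
      -- ≤ direction
      have hle : wlen S ((a * (L.take i).prod)⁻¹ * (a * (L.take j).prod)) ≤ j - i := by
        rw [hel]; simpa [hseglen] using wlen_le_word hsegok rfl
      -- ≥ direction by splicing
      rcases Nat.lt_or_ge (wlen S ((a * (L.take i).prod)⁻¹ * (a * (L.take j).prod))) (j - i)
        with hlt | hge
      · exfalso
        rw [hel] at hlt
        obtain ⟨M, hMok, hMlen, hMprod⟩ := exists_min_word hS seg.prod
        have hsplice : (L.take i ++ M ++ L.drop j).prod = a⁻¹ * b := by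
          rw [List.prod_append, List.prod_append, hMprod, ← hprod]
          calc (L.take i).prod * seg.prod * (L.drop j).prod
              = ((L.take i ++ seg) ++ L.drop j).prod := by
                rw [List.prod_append, List.prod_append]
            _ = (L.take j ++ L.drop j).prod := by rw [← hdecomp]
            _ = L.prod := by rw [List.take_append_drop]
        have hok2 : WOk S (L.take i ++ M ++ L.drop j) := by
          refine wok_append (wok_append ?_ hMok) ?_
          · intro x hx; exact hok x (List.mem_of_mem_take hx)
          · intro x hx; exact hok x (List.mem_of_mem_drop hx)
        have := wlen_le_word hok2 hsplice
        have hlenc : (L.take i ++ M ++ L.drop j).length < L.length := by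
          simp only [List.length_append, List.length_take, List.length_drop]
          rw [hMlen]
          omega
        omega
      · omega
    intro i hi j hj
    rcases Nat.le_total i j with hij | hji
    · rw [key i j hij hj, Nat.dist_eq_sub_of_le hij]
    · have h1 := key j i hji hi
      have : wlen S ((a * (L.take i).prod)⁻¹ * (a * (L.take j).prod))
          = wlen S ((a * (L.take j).prod)⁻¹ * (a * (L.take i).prod)) := by
        rw [← wlen_inv hS]; congr 1; group
      rw [this, h1, Nat.dist_comm, Nat.dist_eq_sub_of_le hji]

end Stmt7

namespace Stmt7

variable {G : Type*} [Group G]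

lemma isDGeodesic_translate {S : Set G} {a b : G} {p : ℕ → G}
    (hp : IsDGeodesic S a b p) (c : G) :
    IsDGeodesic S (c * a) (c * b) (fun i => c * p i) := by
  obtain ⟨h0, hL, hd⟩ := hp
  have hw : (c * a)⁻¹ * (c * b) = a⁻¹ * b := by group
  refine ⟨by simp [h0], ?_, ?_⟩
  · show c * p (wlen S ((c * a)⁻¹ * (c * b))) = c * b
    rw [hw, hL]
  · rw [hw]
    intro i hi j hj
    have : (c * p i)⁻¹ * (c * p j) = (p i)⁻¹ * (p j) := by group
    rw [this]
    exact hd i hi j hj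

lemma isDGeodesic_reverse {S : Set G} (hS : Subgroup.closure S = ⊤) {a b : G} {p : ℕ → G}
    (hp : IsDGeodesic S a b p) :
    IsDGeodesic S b a (fun i => p (wlen S (a⁻¹ * b) - i)) := by
  obtain ⟨h0, hL, hd⟩ := hp
  have hw : wlen S (b⁻¹ * a) = wlen S (a⁻¹ * b) := by
    rw [← wlen_inv hS (a⁻¹ * b)]; congr 1; group
  refine ⟨by simp [hL], ?_, ?_⟩
  · rw [hw]; simpa using h0
  · rw [hw]
    intro i hi j hj
    have := hd (wlen S (a⁻¹ * b) - i) (by omega) (wlen S (a⁻¹ * b) - j) (by omega)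
    rw [this]
    simp only [Nat.dist]
    omega

/-- the points of a geodesic from 1 have word length equal to the index. -/
lemma geodesic_wlen_index {S : Set G} {b : G} {p : ℕ → G}
    (hp : IsDGeodesic S 1 b p) {i : ℕ} (hi : i ≤ wlen S b) : wlen S (p i) = i := by
  obtain ⟨h0, hL, hd⟩ := hp
  have hb : (1 : G)⁻¹ * b = b := by group
  rw [hb] at hd hL
  have := hd 0 (by omega) i hi
  rw [h0] at this
  simpa [Nat.dist] using this

/-- ball counting: a finset contains each ball, with explicit cardinality bound. -/
lemma ball_bound {S : Set G} (hfin : S.Finite) (hS : Subgroup.closure S = ⊤) (r : ℕ) :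
    ∃ B : Finset G, (∀ h : G, wlen S h ≤ r → h ∈ B) ∧
      B.card ≤ (2 * S.ncard + 1) ^ (r + 1) := by
  classical
  induction r with
  | zero =>
      refine ⟨{1}, ?_, ?_⟩
      · intro h hh
        have := eq_one_of_wlen_eq_zero hS (Nat.le_zero.1 hh)
        simp [this]
      · simp
      -- card {1} = 1 ≤ (2m+1)^1
  | succ r ih =>
      obtain ⟨B, hB, hBcard⟩ := ih
      set A : Set G := S ∪ (fun x => x⁻¹) '' S ∪ {1} with hA
      have hAfin : A.Finite := ((hfin.union (hfin.image _)).union (Set.finite_singleton 1))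
      have hAcard : A.ncard ≤ 2 * S.ncard + 1 := by
        calc A.ncard ≤ (S ∪ (fun x => x⁻¹) '' S).ncard + ({1} : Set G).ncard :=
              Set.ncard_union_le _ _
          _ ≤ (S.ncard + ((fun x => x⁻¹) '' S).ncard) + 1 := by
              have := Set.ncard_union_le S ((fun x => x⁻¹) '' S)
              have h1 : ({1} : Set G).ncard = 1 := Set.ncard_singleton 1
              omega
          _ ≤ (S.ncard + S.ncard) + 1 := by
              have := Set.ncard_image_le (s := S) (f := fun x => x⁻¹) hfin
              omega
          _ = 2 * S.ncard + 1 := by ring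
      refine ⟨hAfin.toFinset.biUnion (fun x => B.image (fun h => h * x)), ?_, ?_⟩
      · intro h hh
        obtain ⟨L, hok, hlen, hprod⟩ := exists_min_word hS h
        rcases List.eq_nil_or_concat L with rfl | ⟨L', x, rfl⟩
        · -- h = 1
          have h1 : h = 1 := by rw [← hprod]; simp
          refine Finset.mem_biUnion.2 ⟨1, ?_, ?_⟩
          · simp [Set.Finite.mem_toFinset, hA]
          · refine Finset.mem_image.2 ⟨1, ?_, by simp [h1]⟩
            exact hB 1 (by simp)
        · -- h = L'.prod * x
          have hx : x ∈ A := by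
            rcases hok x (by simp) with h' | h'
            · exact Or.inl (Or.inl h')
            · exact Or.inl (Or.inr ⟨x⁻¹, h', by simp⟩)
          have hL' : wlen S L'.prod ≤ r := by
            have hok' : WOk S L' := fun z hz => hok z (by simp [hz])
            have := wlen_le_word hok' rfl
            have hlen' : L'.length + 1 = (L'.concat x).length := by simp
            omega
          refine Finset.mem_biUnion.2 ⟨x, by simp [Set.Finite.mem_toFinset, hx], ?_⟩
          refine Finset.mem_image.2 ⟨L'.prod, hB _ hL', ?_⟩
          rw [← hprod]; simp
      · calc (hAfin.toFinset.biUnion (fun x => B.image (fun h => h * x))).card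
            ≤ ∑ x ∈ hAfin.toFinset, (B.image (fun h => h * x)).card :=
              Finset.card_biUnion_le
        _ ≤ ∑ _x ∈ hAfin.toFinset, B.card := by
              refine Finset.sum_le_sum ?_
              intro x _
              exact Finset.card_image_le
        _ = hAfin.toFinset.card * B.card := by rw [Finset.sum_const, smul_eq_mul]
        _ ≤ (2 * S.ncard + 1) * (2 * S.ncard + 1) ^ (r + 1) := by
              have hc : hAfin.toFinset.card = A.ncard := by
                rw [Set.ncard_eq_toFinset_card A hAfin]
              refine Nat.mul_le_mul ?_ hBcard
              omega
        _ = (2 * S.ncard + 1) ^ (r + 2) := by ring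

/-- powers of an infinite-order element are injective. -/
lemma pow_inj {g : G} (hg : ¬ IsOfFinOrder g) {i j : ℕ} (hij : g ^ i = g ^ j) : i = j := by
  rcases Nat.lt_trichotomy i j with h | h | h
  · exfalso
    apply hg
    refine isOfFinOrder_iff_pow_eq_one.2 ⟨j - i, by omega, ?_⟩
    have e1 : i + (j - i) = j := by omega
    have : g ^ i * g ^ (j - i) = g ^ i * 1 := by
      calc g ^ i * g ^ (j - i) = g ^ j := by rw [← pow_add, e1]
        _ = g ^ i := hij.symm
        _ = g ^ i * 1 := by rw [mul_one]
    exact mul_left_cancel this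
  · exact h
  · exfalso
    apply hg
    refine isOfFinOrder_iff_pow_eq_one.2 ⟨i - j, by omega, ?_⟩
    have e1 : j + (i - j) = i := by omega
    have : g ^ j * g ^ (i - j) = g ^ j * 1 := by
      calc g ^ j * g ^ (i - j) = g ^ i := by rw [← pow_add, e1]
        _ = g ^ j := hij
        _ = g ^ j * 1 := by rw [mul_one]
    exact mul_left_cancel this

/-- word lengths of powers are unbounded. -/
lemma exists_big_power {S : Set G} (hfin : S.Finite) (hS : Subgroup.closure S = ⊤)
    {g : G} (hg : ¬ IsOfFinOrder g) (X : ℕ) : ∃ k : ℕ, X < wlen S (g ^ k) := by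
  by_contra hc
  push_neg at hc
  obtain ⟨B, hB, _⟩ := ball_bound hfin hS X
  have hsub : Set.range (fun k : ℕ => g ^ k) ⊆ ↑B := by
    rintro _ ⟨k, rfl⟩
    exact hB _ (hc k)
  have hinf : (Set.range (fun k : ℕ => g ^ k)).Infinite :=
    Set.infinite_range_of_injective (fun i j => pow_inj hg)
  exact hinf (B.finite_toSet.subset hsub)

end Stmt7

namespace Stmt7

variable {G : Type*} [Group G]

/-- extract an integer thinness bound from the hyperbolicity hypothesis. -/
lemma thin {S : Set G} {δ : ℝ} (hδ : 0 ≤ δ) (hhyp : GroupHyperbolic S δ)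
    {a b c : G} {p q : ℕ → G}
    (hp : IsDGeodesic S a b p) (hq : IsDGeodesic S a c q) {i : ℕ}
    (hi : 2 * i + wlen S (b⁻¹ * c) ≤ wlen S (a⁻¹ * b) + wlen S (a⁻¹ * c)) :
    wlen S ((p i)⁻¹ * q i) ≤ ⌊δ⌋₊ := by
  refine Nat.le_floor (hhyp a b c p q hp hq i ?_)
  have : (2 * i + wlen S (b⁻¹ * c) : ℝ) ≤ wlen S (a⁻¹ * b) + wlen S (a⁻¹ * c) := by
    exact_mod_cast hi
  linarith

lemma wlen_from_one {S : Set G} (x : G) : wlen S ((1 : G)⁻¹ * x) = wlen S x := by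
  rw [inv_one, one_mul]

/-- The drift lemma: `g^s` moves a deep point on a geodesic `[1, g^k]` to a point
on the same geodesic, shifted by the drift `wlen g^(s+k) - wlen g^k`, up to `2δ`. -/
lemma drift {S : Set G} {δ : ℝ} {g : G}
    (hgen : Subgroup.closure S = ⊤) (hδ : 0 ≤ δ) (hhyp : GroupHyperbolic S δ)
    {k s u : ℕ} {Q : ℕ → G}
    (hQ : IsDGeodesic S 1 (g ^ k) Q)
    (hs : wlen S (g ^ s) ≤ u) (hu : u + wlen S (g ^ s) ≤ wlen S (g ^ k)) :
    wlen S ((Q u)⁻¹ * (g ^ s * Q (u + wlen S (g ^ k) - wlen S (g ^ (s + k))))) ≤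
      2 * ⌊δ⌋₊ := by
  set F := wlen S (g ^ k) with hF
  set Fs := wlen S (g ^ (s + k)) with hFs
  set w := wlen S (g ^ s) with hw
  -- triangle facts
  have tri1 : Fs ≤ w + F := by
    rw [hFs, hw, hF, pow_add]; exact wlen_mul_le hgen _ _
  have tri2 : F ≤ w + Fs := by
    have : g ^ k = (g ^ s)⁻¹ * g ^ (s + k) := by rw [pow_add]; group
    calc F = wlen S ((g ^ s)⁻¹ * g ^ (s + k)) := by rw [hF, ← this]
      _ ≤ wlen S ((g ^ s)⁻¹) + Fs := wlen_mul_le hgen _ _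
      _ = w + Fs := by rw [wlen_inv hgen]
  set u' := u + F - Fs with hu'
  obtain ⟨Q', hQ'⟩ := exists_geodesic hgen (1 : G) (g ^ (s + k))
  -- T1 : the two geodesics from 1 fellow-travel at depth u
  have T1 : wlen S ((Q u)⁻¹ * Q' u) ≤ ⌊δ⌋₊ := by
    refine thin hδ hhyp hQ hQ' ?_
    have e1 : (g ^ k)⁻¹ * g ^ (s + k) = g ^ s := by
      rw [show s + k = k + s by omega, pow_add, inv_mul_cancel_left]
    rw [wlen_from_one, wlen_from_one, e1, ← hF, ← hFs, ← hw]
    omega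
  -- T2 : reversed geodesics from g^(s+k)
  have hrev := isDGeodesic_reverse hgen hQ
  simp only [inv_one, one_mul] at hrev
  have htrans := isDGeodesic_translate hrev (g ^ s)
  rw [show g ^ s * g ^ k = g ^ (s + k) by rw [pow_add], mul_one] at htrans
  have hrev' := isDGeodesic_reverse hgen hQ'
  simp only [inv_one, one_mul] at hrev'
  -- apply thinness at the vertex g^(s+k)
  have T2 : wlen S ((g ^ s * Q u')⁻¹ * Q' u) ≤ ⌊δ⌋₊ := by
    have hcond : 2 * (Fs - u) + wlen S ((g ^ s)⁻¹ * 1) ≤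
        wlen S ((g ^ (s + k))⁻¹ * g ^ s) + wlen S ((g ^ (s + k))⁻¹ * 1) := by
      have e2 : (g ^ (s + k))⁻¹ * g ^ s = (g ^ k)⁻¹ := by
        rw [pow_add]; simp [mul_inv_rev, mul_assoc]
      have e3 : wlen S ((g ^ (s + k))⁻¹ * 1) = Fs := by
        rw [mul_one, wlen_inv hgen]
      have e4 : wlen S ((g ^ s)⁻¹ * 1) = w := by
        rw [mul_one, wlen_inv hgen]
      rw [e2, e3, e4, wlen_inv hgen, ← hF]
      omega
    have h := thin hδ hhyp htrans hrev' hcond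
    have i1 : F - (Fs - u) = u' := by omega
    have i2 : Fs - (Fs - u) = u := by omega
    have i1' : wlen S (g ^ k) - (Fs - u) = u' := by omega
    have i2' : wlen S (g ^ (s + k)) - (Fs - u) = u := by omega
    simpa [i1, i2, i1', i2'] using h
  -- combine
  have decomp : (Q u)⁻¹ * (g ^ s * Q u') =
      ((Q u)⁻¹ * Q' u) * ((g ^ s * Q u')⁻¹ * Q' u)⁻¹ := by group
  rw [decomp]
  calc wlen S (((Q u)⁻¹ * Q' u) * ((g ^ s * Q u')⁻¹ * Q' u)⁻¹)
      ≤ wlen S ((Q u)⁻¹ * Q' u) + wlen S (((g ^ s * Q u')⁻¹ * Q' u)⁻¹) :=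
        wlen_mul_le hgen _ _
    _ = wlen S ((Q u)⁻¹ * Q' u) + wlen S ((g ^ s * Q u')⁻¹ * Q' u) := by
        rw [wlen_inv hgen]
    _ ≤ ⌊δ⌋₊ + ⌊δ⌋₊ := by omega
    _ = 2 * ⌊δ⌋₊ := by ring

end Stmt7

namespace Stmt7

variable {G : Type*} [Group G]

lemma wlen_shift_le {S : Set G} (hgen : Subgroup.closure S = ⊤) (g : G) (σ k : ℕ) :
    wlen S (g ^ (σ + k)) ≤ wlen S (g ^ σ) + wlen S (g ^ k) := by
  rw [pow_add]; exact wlen_mul_le hgen _ _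

lemma wlen_shift_ge {S : Set G} (hgen : Subgroup.closure S = ⊤) (g : G) (σ k : ℕ) :
    wlen S (g ^ k) ≤ wlen S (g ^ σ) + wlen S (g ^ (σ + k)) := by
  have : g ^ k = (g ^ σ)⁻¹ * g ^ (σ + k) := by rw [pow_add]; group
  calc wlen S (g ^ k) = wlen S ((g ^ σ)⁻¹ * g ^ (σ + k)) := by rw [← this]
    _ ≤ wlen S ((g ^ σ)⁻¹) + wlen S (g ^ (σ + k)) := wlen_mul_le hgen _ _
    _ = wlen S (g ^ σ) + wlen S (g ^ (σ + k)) := by rw [wlen_inv hgen]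

/-- the quasimorphism / cocycle estimate. -/
lemma cocycle {S : Set G} {δ : ℝ} {g : G}
    (hgen : Subgroup.closure S = ⊤) (hδ : 0 ≤ δ) (hhyp : GroupHyperbolic S δ)
    {k s s' : ℕ}
    (hbig : 4 * wlen S (g ^ s) + 4 * wlen S (g ^ s') + 16 * ⌊δ⌋₊ + 16 ≤ wlen S (g ^ k)) :
    Nat.dist (wlen S (g ^ (s + k)) + wlen S (g ^ (s' + k)))
      (wlen S (g ^ k) + wlen S (g ^ ((s + s') + k))) ≤ 6 * ⌊δ⌋₊ := by
  obtain ⟨Q, hQ⟩ := exists_geodesic hgen (1 : G) (g ^ k)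
  set D := ⌊δ⌋₊ with hD
  set F := wlen S (g ^ k) with hF
  set ws := wlen S (g ^ s) with hws
  set ws' := wlen S (g ^ s') with hws'
  set wss := wlen S (g ^ (s + s')) with hwss
  set Fs := wlen S (g ^ (s + k)) with hFs
  set Fs' := wlen S (g ^ (s' + k)) with hFs'
  set Fss := wlen S (g ^ ((s + s') + k)) with hFss
  have twss : wss ≤ ws + ws' := by
    rw [hwss, hws, hws', pow_add]; exact wlen_mul_le hgen _ _
  have t1 : Fs ≤ ws + F := wlen_shift_le hgen g s k
  have t2 : F ≤ ws + Fs := wlen_shift_ge hgen g s k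
  have t3 : Fs' ≤ ws' + F := wlen_shift_le hgen g s' k
  have t4 : F ≤ ws' + Fs' := wlen_shift_ge hgen g s' k
  have t5 : Fss ≤ wss + F := wlen_shift_le hgen g (s + s') k
  have t6 : F ≤ wss + Fss := wlen_shift_ge hgen g (s + s') k
  set ustar := F / 2 with hustar
  set A := ustar + F - Fss with hA
  set B := ustar + F - Fs with hB
  set C := B + F - Fs' with hC
  have h1 : wlen S ((Q ustar)⁻¹ * (g ^ (s + s') * Q A)) ≤ 2 * D := by
    exact drift hgen hδ hhyp hQ (by omega) (by omega)
  have h2 : wlen S ((Q ustar)⁻¹ * (g ^ s * Q B)) ≤ 2 * D := by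
    exact drift hgen hδ hhyp hQ (by omega) (by omega)
  have h3 : wlen S ((Q B)⁻¹ * (g ^ s' * Q C)) ≤ 2 * D := by
    exact drift hgen hδ hhyp hQ (by omega) (by omega)
  -- combine h2 and h3
  have h4 : wlen S ((Q ustar)⁻¹ * (g ^ (s + s') * Q C)) ≤ 4 * D := by
    have e : (Q ustar)⁻¹ * (g ^ (s + s') * Q C) =
        ((Q ustar)⁻¹ * (g ^ s * Q B)) * ((Q B)⁻¹ * (g ^ s' * Q C)) := by
      rw [pow_add]; group
    rw [e]
    calc wlen S _ ≤ wlen S ((Q ustar)⁻¹ * (g ^ s * Q B)) +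
          wlen S ((Q B)⁻¹ * (g ^ s' * Q C)) := wlen_mul_le hgen _ _
      _ ≤ 4 * D := by omega
  -- hence Q A and Q C are close
  have h5 : wlen S ((Q A)⁻¹ * Q C) ≤ 6 * D := by
    have e : (Q A)⁻¹ * Q C =
        ((Q ustar)⁻¹ * (g ^ (s + s') * Q A))⁻¹ * ((Q ustar)⁻¹ * (g ^ (s + s') * Q C)) := by
      group
    rw [e]
    calc wlen S _ ≤ wlen S (((Q ustar)⁻¹ * (g ^ (s + s') * Q A))⁻¹) +
          wlen S ((Q ustar)⁻¹ * (g ^ (s + s') * Q C)) := wlen_mul_le hgen _ _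
      _ = wlen S ((Q ustar)⁻¹ * (g ^ (s + s') * Q A)) +
          wlen S ((Q ustar)⁻¹ * (g ^ (s + s') * Q C)) := by rw [wlen_inv hgen]
      _ ≤ 6 * D := by omega
  -- and their indices are close
  obtain ⟨-, -, hd⟩ := hQ
  rw [wlen_from_one] at hd
  have h6 : wlen S ((Q A)⁻¹ * Q C) = Nat.dist A C := by
    exact hd A (by omega) C (by omega)
  rw [h6] at h5
  simp only [Nat.dist] at h5 ⊢
  omega

/-- the pigeonhole constant: an upper bound for balls of radius `8D+4`, plus one. -/
def S0const (m D : ℕ) : ℕ := (2 * m + 1) ^ (8 * D + 5) + 1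

variable {G : Type*} [Group G]

/-- Dichotomy: at any sufficiently deep base `k`, some small power has large drift. -/
lemma dichotomy {S : Set G} {δ : ℝ} {g : G} (hfin : S.Finite)
    (hgen : Subgroup.closure S = ⊤) (hδ : 0 ≤ δ) (hhyp : GroupHyperbolic S δ)
    (hg : ¬ IsOfFinOrder g) {k : ℕ}
    (hbig : 4 * (S0const S.ncard ⌊δ⌋₊ * wlen S g) + 16 * ⌊δ⌋₊ + 16 ≤ wlen S (g ^ k)) :
    ∃ σ, 1 ≤ σ ∧ σ ≤ S0const S.ncard ⌊δ⌋₊ ∧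
      6 * ⌊δ⌋₊ + 5 ≤ Nat.dist (wlen S (g ^ (σ + k))) (wlen S (g ^ k)) := by
  set D := ⌊δ⌋₊ with hD
  set m := S.ncard with hm
  set N := S0const m D with hN
  set n := wlen S g with hn
  set W := N * n with hW
  set F := wlen S (g ^ k) with hF
  by_contra hcon
  push_neg at hcon
  obtain ⟨Q, hQ⟩ := exists_geodesic hgen (1 : G) (g ^ k)
  obtain ⟨hQ0, hQF, hQd⟩ := hQ
  rw [wlen_from_one] at hQd hQF
  have hQ' : IsDGeodesic S 1 (g ^ k) Q := by
    refine ⟨hQ0, ?_, ?_⟩ <;> rw [wlen_from_one] <;> [exact hQF; exact hQd]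
  set ustar := F / 2 with hustar
  -- each small conjugate is short
  have hφ : ∀ σ, σ ≤ N → wlen S ((Q ustar)⁻¹ * (g ^ σ * Q ustar)) ≤ 8 * D + 4 := by
    intro σ hσ
    rcases Nat.eq_zero_or_pos σ with rfl | hσ1
    · have e : (Q ustar)⁻¹ * (g ^ 0 * Q ustar) = 1 := by
        rw [pow_zero]; group
      rw [e, wlen_one]
      omega
    · have hws : wlen S (g ^ σ) ≤ N * n := by
        calc wlen S (g ^ σ) ≤ σ * n := wlen_pow_le hgen g σ
          _ ≤ N * n := Nat.mul_le_mul_right n hσ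
      set Fσ := wlen S (g ^ (σ + k)) with hFσ
      have t1 : Fσ ≤ wlen S (g ^ σ) + F := wlen_shift_le hgen g σ k
      have t2 : F ≤ wlen S (g ^ σ) + Fσ := wlen_shift_ge hgen g σ k
      set B := ustar + F - Fσ with hB
      have hdrift : wlen S ((Q ustar)⁻¹ * (g ^ σ * Q B)) ≤ 2 * D := by
        exact drift hgen hδ hhyp hQ' (by omega) (by omega)
      have hclose : 6 * D + 5 > Nat.dist Fσ F := hcon σ hσ1 hσ
      have hseg : wlen S ((Q B)⁻¹ * Q ustar) = Nat.dist B ustar :=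
        hQd B (by omega) ustar (by omega)
      have e : (Q ustar)⁻¹ * (g ^ σ * Q ustar) =
          ((Q ustar)⁻¹ * (g ^ σ * Q B)) * ((Q B)⁻¹ * Q ustar) := by group
      rw [e]
      calc wlen S _ ≤ wlen S ((Q ustar)⁻¹ * (g ^ σ * Q B)) +
            wlen S ((Q B)⁻¹ * Q ustar) := wlen_mul_le hgen _ _
        _ ≤ 2 * D + Nat.dist B ustar := by omega
        _ ≤ 8 * D + 4 := by
            simp only [Nat.dist] at hclose ⊢
            omega
  -- pigeonhole
  obtain ⟨Bf, hBf, hBfcard⟩ := ball_bound hfin hgen (8 * D + 4)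
  have hinj : Set.InjOn (fun σ : ℕ => (Q ustar)⁻¹ * (g ^ σ * Q ustar))
      ↑(Finset.range (N + 1)) := by
    intro σ1 _ σ2 _ hEq
    simp only at hEq
    have : g ^ σ1 = g ^ σ2 := by
      have h1 := mul_left_cancel hEq
      have h2 := mul_right_cancel h1
      exact h2
    exact pow_inj hg this
  have hmaps : ∀ σ ∈ Finset.range (N + 1),
      (Q ustar)⁻¹ * (g ^ σ * Q ustar) ∈ Bf := by
    intro σ hσ
    exact hBf _ (hφ σ (by simpa using Nat.lt_succ_iff.mp (Finset.mem_range.1 hσ)))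
  have hcard := Finset.card_le_card_of_injOn _ hmaps hinj
  rw [Finset.card_range] at hcard
  have h9 : N = (2 * m + 1) ^ (8 * D + 5) + 1 := hN
  have h10 : (2 * S.ncard + 1) ^ (8 * D + 4 + 1) = (2 * m + 1) ^ (8 * D + 5) := by
    rw [hm]
  omega

/-- Amplification: linear lower bound on word lengths along some progression. -/
lemma amplification {S : Set G} {δ : ℝ} {g : G} (hfin : S.Finite)
    (hgen : Subgroup.closure S = ⊤) (hδ : 0 ≤ δ) (hhyp : GroupHyperbolic S δ)
    (hg : ¬ IsOfFinOrder g) (J : ℕ) :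
    ∃ σ, 1 ≤ σ ∧ σ ≤ S0const S.ncard ⌊δ⌋₊ ∧ 5 * J ≤ wlen S (g ^ (J * σ)) := by
  set D := ⌊δ⌋₊ with hD
  set N := S0const S.ncard ⌊δ⌋₊ with hN
  set n := wlen S g with hn
  have hN1 : 1 ≤ N := by rw [hN]; unfold S0const; omega
  rcases Nat.eq_zero_or_pos J with rfl | hJ
  · exact ⟨1, le_refl 1, hN1, by simp⟩
  set W := N * n with hW
  obtain ⟨k, hk⟩ := exists_big_power hfin hgen hg
    (16 * (J * W) + 4 * W + 16 * D + 16)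
  obtain ⟨σ, hσ1, hσN, hσbig⟩ := dichotomy hfin hgen hδ hhyp hg
    (k := k) (by show 4 * W + 16 * D + 16 ≤ wlen S (g ^ k); omega)
  refine ⟨σ, hσ1, hσN, ?_⟩
  set aj : ℕ → ℤ := fun j => (wlen S (g ^ (j * σ + k)) : ℤ) - (wlen S (g ^ k) : ℤ)
    with haj
  have hwle : ∀ j : ℕ, j ≤ 2 * J → wlen S (g ^ (j * σ)) ≤ 2 * (J * W) := by
    intro j hj
    calc wlen S (g ^ (j * σ)) ≤ (j * σ) * n := wlen_pow_le hgen g _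
      _ ≤ (2 * J * N) * n := by
          have : j * σ ≤ 2 * J * N := Nat.mul_le_mul hj hσN
          exact Nat.mul_le_mul_right n this
      _ = 2 * (J * W) := by rw [hW]; ring
  have hco : ∀ i j : ℕ, i + j ≤ 2 * J →
      (aj (i + j) - aj i - aj j).natAbs ≤ 6 * D := by
    intro i j hij
    have hc := cocycle (g := g) hgen hδ hhyp (k := k) (s := i * σ) (s' := j * σ)
      (by
        have h1 := hwle i (by omega)
        have h2 := hwle j (by omega)
        omega)
    have e : i * σ + j * σ = (i + j) * σ := by ring
    rw [e] at hc
    simp only [Nat.dist] at hc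
    simp only [haj]
    omega
  have habs1 : 6 * D + 5 ≤ (aj 1).natAbs := by
    simp only [haj, one_mul]
    simp only [Nat.dist] at hσbig
    omega
  have hfin1 : (aj J).natAbs ≤ wlen S (g ^ (J * σ)) := by
    have h1 := wlen_shift_le hgen g (J * σ) k
    have h2 := wlen_shift_ge hgen g (J * σ) k
    simp only [haj]
    omega
  rcases le_or_gt 0 (aj 1) with hsign | hsign
  · have key : ∀ j, 1 ≤ j → j ≤ J → (5 * j : ℤ) ≤ aj j := by
      intro j
      induction j with
      | zero => omega
      | succ j ih =>
          intro _ hj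
          rcases Nat.eq_zero_or_pos j with rfl | hj1
          · simpa using by omega
          · have h1 := ih hj1 (by omega)
            have h2 := hco j 1 (by omega)
            push_cast
            omega
    have := key J hJ (le_refl J)
    omega
  · have key : ∀ j, 1 ≤ j → j ≤ J → (aj j : ℤ) ≤ -(5 * j) := by
      intro j
      induction j with
      | zero => omega
      | succ j ih =>
          intro _ hj
          rcases Nat.eq_zero_or_pos j with rfl | hj1
          · simpa using by omega
          · have h1 := ih hj1 (by omega)
            have h2 := hco j 1 (by omega)
            push_cast
            omega
    have := key J hJ (le_refl J)
    omega

def C6const (D : ℕ) : ℕ := 7 * D + 8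
def Rconst (m D n : ℕ) : ℕ := 12 * (S0const m D + n + 7 * D + 8) + 120
def Pconst (m D n : ℕ) : ℕ := Rconst m D n + S0const m D
def M0const (m D n : ℕ) : ℕ := 2 ^ (Pconst m D n)

lemma key_arith (N n D : ℕ) :
    (12 * (N + n + 7 * D + 8) + 120 + N) *
      (n + (12 * (N + n + 7 * D + 8) + 120 + N) * (7 * D + 8)) <
    5 * 2 ^ (12 * (N + n + 7 * D + 8) + 120) := by
  set K := N + n + 7 * D + 8 with hK
  set R := 12 * K + 120 with hR
  set P := R + N with hP
  have hPle : P ≤ 13 * K + 121 := by omega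
  have hnle : n ≤ K := by omega
  have hCle : 7 * D + 8 ≤ K := by omega
  have c1 : n + P * (7 * D + 8) ≤ K + (13 * K + 121) * K := by
    have := Nat.mul_le_mul hPle hCle
    omega
  have c2 : P * (n + P * (7 * D + 8)) ≤ (13 * K + 122) ^ 3 := by
    calc P * (n + P * (7 * D + 8)) ≤ (13 * K + 121) * (K + (13 * K + 121) * K) :=
          Nat.mul_le_mul hPle c1
      _ = (13 * K + 121) * ((13 * K + 122) * K) := by ring
      _ ≤ (13 * K + 122) * ((13 * K + 122) * (13 * K + 122)) := by
          refine Nat.mul_le_mul (by omega) (Nat.mul_le_mul_left _ (by omega))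
      _ = (13 * K + 122) ^ 3 := by ring
  have c3 : 13 * K + 122 ≤ 2 ^ (K + 8) := by
    have h1 : K + 1 ≤ 2 ^ K := Nat.lt_two_pow_self
    calc 13 * K + 122 ≤ 256 * (K + 1) := by omega
      _ ≤ 256 * 2 ^ K := Nat.mul_le_mul_left _ h1
      _ = 2 ^ (K + 8) := by rw [pow_add]; ring
  have c4 : (13 * K + 122) ^ 3 ≤ 2 ^ (3 * K + 24) := by
    calc (13 * K + 122) ^ 3 ≤ (2 ^ (K + 8)) ^ 3 := Nat.pow_le_pow_left c3 3
      _ = 2 ^ ((K + 8) * 3) := by rw [← pow_mul]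
      _ = 2 ^ (3 * K + 24) := by ring_nf
  have c5 : (2 : ℕ) ^ (3 * K + 24) ≤ 2 ^ R := by
    refine Nat.pow_le_pow_right (by norm_num) (by omega)
  have c6 : 0 < 2 ^ R := pow_pos (by norm_num) R
  calc P * (n + P * (7 * D + 8)) ≤ (13 * K + 122) ^ 3 := c2
    _ ≤ 2 ^ (3 * K + 24) := c4
    _ ≤ 2 ^ R := c5
    _ < 5 * 2 ^ R := by omega

variable {G : Type*} [Group G]

/-- there is an explicitly bounded `k` at which doubling is violated. -/
lemma exists_doubling_violation {S : Set G} {δ : ℝ} {g : G} (hfin : S.Finite)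
    (hgen : Subgroup.closure S = ⊤) (hδ : 0 ≤ δ) (hhyp : GroupHyperbolic S δ)
    (hg : ¬ IsOfFinOrder g) :
    ∃ k, 1 ≤ k ∧ k ≤ M0const S.ncard ⌊δ⌋₊ (wlen S g) ∧
      wlen S (g ^ k) + C6const ⌊δ⌋₊ < wlen S (g ^ (2 * k)) := by
  set D := ⌊δ⌋₊ with hD
  set m := S.ncard with hm
  set n := wlen S g with hn
  set N := S0const m D with hN
  set C6 := C6const D with hC6
  set R := Rconst m D n with hR
  set P := Pconst m D n with hP
  set M0 := M0const m D n with hM0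
  have hPdef : P = R + N := rfl
  have hM0def : M0 = 2 ^ P := rfl
  by_contra hcon
  push_neg at hcon
  -- dyadic bound
  have hdy : ∀ j, j ≤ P → wlen S (g ^ (2 ^ j)) ≤ n + j * C6 := by
    intro j
    induction j with
    | zero => intro _; simpa [hn] using by rw [pow_zero, pow_one]
    | succ j ih =>
        intro hj
        have h1 := ih (by omega)
        have h2 := hcon (2 ^ j) (Nat.one_le_two_pow)
          (by rw [hM0def]; exact Nat.pow_le_pow_right (by norm_num) (by omega))
        have e : 2 ^ (j + 1) = 2 * 2 ^ j := by rw [pow_succ]; ring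
        rw [e]
        calc wlen S (g ^ (2 * 2 ^ j)) ≤ wlen S (g ^ (2 ^ j)) + C6 := h2
          _ ≤ n + j * C6 + C6 := by omega
          _ = n + (j + 1) * C6 := by ring
  -- binary expansion bound
  have hbin : ∀ Q : ℕ, Q ≤ P → ∀ mm, mm < 2 ^ Q →
      wlen S (g ^ mm) ≤ Q * (n + P * C6) := by
    intro Q
    induction Q with
    | zero =>
        intro _ mm hmm
        interval_cases mm
        simp
    | succ Q ih =>
        intro hQ mm hmm
        rcases Nat.lt_or_ge mm (2 ^ Q) with h | h
        · calc wlen S (g ^ mm) ≤ Q * (n + P * C6) := ih (by omega) mm h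
            _ ≤ (Q + 1) * (n + P * C6) := by
                have : Q * (n + P * C6) + 0 ≤ Q * (n + P * C6) + (n + P * C6) := by omega
                calc Q * (n + P * C6) = Q * (n + P * C6) + 0 := by ring
                  _ ≤ Q * (n + P * C6) + (n + P * C6) := this
                  _ = (Q + 1) * (n + P * C6) := by ring
        · have hrem : mm - 2 ^ Q < 2 ^ Q := by
            have : (2:ℕ) ^ (Q + 1) = 2 ^ Q + 2 ^ Q := by rw [pow_succ]; ring
            omega
        -- split
          have hsplit : g ^ mm = g ^ (2 ^ Q) * g ^ (mm - 2 ^ Q) := by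
            rw [← pow_add]
            congr 1
            omega
          have hQC : Q * C6 ≤ P * C6 := Nat.mul_le_mul_right C6 (by omega)
          calc wlen S (g ^ mm) ≤ wlen S (g ^ (2 ^ Q)) + wlen S (g ^ (mm - 2 ^ Q)) := by
                rw [hsplit]; exact wlen_mul_le hgen _ _
            _ ≤ (n + Q * C6) + Q * (n + P * C6) := by
                have h3 := hdy Q (by omega)
                have h4 := ih (by omega) _ hrem
                omega
            _ ≤ (Q + 1) * (n + P * C6) := by
                have e : (Q + 1) * (n + P * C6) = Q * (n + P * C6) + (n + P * C6) := by
                  ring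
                omega
  -- amplification at J := 2^R
  obtain ⟨σ, hσ1, hσN, hgrow⟩ := amplification hfin hgen hδ hhyp hg (2 ^ R)
  have hm' : 2 ^ R * σ < 2 ^ P := by
    have h1 : 2 ^ R * σ ≤ 2 ^ R * N := Nat.mul_le_mul_left _ hσN
    have h2 : N < 2 ^ N := Nat.lt_two_pow_self
    have h3 : 2 ^ R * N < 2 ^ R * 2 ^ N :=
      mul_lt_mul_of_pos_left h2 (pow_pos (by norm_num) R)
    have h4 : (2:ℕ) ^ R * 2 ^ N = 2 ^ P := by rw [← pow_add, hPdef]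
    omega
  have happ := hbin P (le_refl P) (2 ^ R * σ) hm'
  -- contradiction with key_arith
  have hka := key_arith N n D
  have hRN : R = 12 * (N + n + 7 * D + 8) + 120 := rfl
  have hPN : P = 12 * (N + n + 7 * D + 8) + 120 + N := by
    rw [hPdef, hRN]
  have hC6N : C6 = 7 * D + 8 := rfl
  rw [← hPN, ← hRN, ← hC6N] at hka
  omega

variable {G : Type*} [Group G]

/-- The extractor: from a doubling violation, produce a long straight conjugate. -/
lemma extractor {S : Set G} {δ : ℝ} {g : G}
    (hgen : Subgroup.closure S = ⊤) (hδ : 0 ≤ δ) (hhyp : GroupHyperbolic S δ)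
    {k : ℕ} (hk : wlen S (g ^ k) + C6const ⌊δ⌋₊ < wlen S (g ^ (2 * k))) :
    ∃ u : G, wlen S u ≤ wlen S (g ^ k) ∧
      6 * ⌊δ⌋₊ + 8 < wlen S (u⁻¹ * (g ^ k * u)) ∧
      2 * wlen S (u⁻¹ * (g ^ k * u)) ≤ wlen S (u⁻¹ * (g ^ (2 * k) * u)) + 2 * ⌊δ⌋₊ + 2 := by
  set D := ⌊δ⌋₊ with hD
  set F := wlen S (g ^ k) with hF
  set F2 := wlen S (g ^ (2 * k)) with hF2
  have hC6 : C6const D = 7 * D + 8 := rfl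
  have hdouble : F2 ≤ 2 * F := by
    calc F2 = wlen S (g ^ k * g ^ k) := by rw [hF2, ← pow_add]; ring_nf
      _ ≤ F + F := wlen_mul_le hgen _ _
      _ = 2 * F := by ring
  set i0 := (2 * F - F2) / 2 with hi0
  obtain ⟨Q, hQ⟩ := exists_geodesic hgen (1 : G) (g ^ k)
  obtain ⟨hQ0, hQF, hQd⟩ := hQ
  rw [wlen_from_one] at hQF hQd
  have hQ' : IsDGeodesic S 1 (g ^ k) Q := by
    refine ⟨hQ0, ?_, ?_⟩ <;> rw [wlen_from_one] <;> [exact hQF; exact hQd]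
  -- the reflected geodesic to (g^k)⁻¹
  have hrev := isDGeodesic_reverse hgen hQ'
  simp only [inv_one, one_mul] at hrev
  have htrans := isDGeodesic_translate hrev ((g ^ k)⁻¹)
  rw [inv_mul_cancel, mul_one] at htrans
  -- thinness at depth i0
  have hstar : wlen S ((Q (F - i0))⁻¹ * (g ^ k * Q i0)) ≤ D := by
    have hcond : 2 * i0 + wlen S (((g ^ k)⁻¹)⁻¹ * g ^ k) ≤
        wlen S ((1 : G)⁻¹ * (g ^ k)⁻¹) + wlen S ((1 : G)⁻¹ * g ^ k) := by
      have e1 : ((g ^ k)⁻¹)⁻¹ * g ^ k = g ^ (2 * k) := by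
        rw [inv_inv, ← pow_add]; ring_nf
      rw [e1, wlen_from_one, wlen_from_one, wlen_inv hgen, ← hF, ← hF2]
      omega
    have h := thin hδ hhyp htrans hQ' hcond
    have e2 : ((g ^ k)⁻¹ * Q (F - i0))⁻¹ * Q i0 =
        (Q (F - i0))⁻¹ * (g ^ k * Q i0) := by group
    rw [← e2]
    exact h
  have hwu : wlen S (Q i0) = i0 := geodesic_wlen_index hQ' (by omega)
  have hseg : wlen S ((Q i0)⁻¹ * Q (F - i0)) = F - 2 * i0 := by
    have := hQd i0 (by omega) (F - i0) (by omega)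
    rw [this]
    simp only [Nat.dist]
    omega
  have hkF : F + (7 * D + 8) < F2 := by rw [hC6] at hk; exact hk
  obtain ⟨L0, hL0⟩ : ∃ L0, F = 2 * i0 + L0 := ⟨F - 2 * i0, by omega⟩
  have hL0big : 7 * D + 9 ≤ L0 := by omega
  have hseg' : wlen S ((Q i0)⁻¹ * Q (F - i0)) = L0 := by rw [hseg]; omega
  -- upper bound for y
  have hupper : wlen S ((Q i0)⁻¹ * (g ^ k * Q i0)) ≤ L0 + D := by
    have e : (Q i0)⁻¹ * (g ^ k * Q i0) =
        ((Q i0)⁻¹ * Q (F - i0)) * ((Q (F - i0))⁻¹ * (g ^ k * Q i0)) := by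
      group
    rw [e]
    calc wlen S _ ≤ wlen S ((Q i0)⁻¹ * Q (F - i0)) +
          wlen S ((Q (F - i0))⁻¹ * (g ^ k * Q i0)) := wlen_mul_le hgen _ _
      _ ≤ L0 + D := by omega
  -- lower bound for y
  have hlower : L0 ≤ wlen S ((Q i0)⁻¹ * (g ^ k * Q i0)) + D := by
    have e : (Q i0)⁻¹ * Q (F - i0) =
        ((Q i0)⁻¹ * (g ^ k * Q i0)) * ((Q (F - i0))⁻¹ * (g ^ k * Q i0))⁻¹ := by
      group
    calc L0 = wlen S ((Q i0)⁻¹ * Q (F - i0)) := hseg'.symm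
      _ ≤ wlen S ((Q i0)⁻¹ * (g ^ k * Q i0)) +
          wlen S (((Q (F - i0))⁻¹ * (g ^ k * Q i0))⁻¹) := by
          rw [e]; exact wlen_mul_le hgen _ _
      _ ≤ wlen S ((Q i0)⁻¹ * (g ^ k * Q i0)) + D := by rw [wlen_inv hgen]; omega
  -- square of y
  have hysq : ((Q i0)⁻¹ * (g ^ k * Q i0)) * ((Q i0)⁻¹ * (g ^ k * Q i0)) =
      (Q i0)⁻¹ * (g ^ (2 * k) * Q i0) := by
    rw [show (2 : ℕ) * k = k + k by ring, pow_add]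
    group
  have hsqlow : F2 ≤ 2 * i0 + wlen S ((Q i0)⁻¹ * (g ^ (2 * k) * Q i0)) := by
    have e : g ^ (2 * k) = (Q i0) * ((Q i0)⁻¹ * (g ^ (2 * k) * Q i0)) * (Q i0)⁻¹ := by
      group
    calc F2 = wlen S (g ^ (2 * k)) := hF2
      _ ≤ wlen S ((Q i0) * ((Q i0)⁻¹ * (g ^ (2 * k) * Q i0))) + wlen S (Q i0)⁻¹ := by
          rw [← wlen_inv hgen (Q i0)] at *
          conv_lhs => rw [e]
          exact wlen_mul_le hgen _ _
      _ ≤ wlen S (Q i0) + wlen S ((Q i0)⁻¹ * (g ^ (2 * k) * Q i0)) +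
            wlen S ((Q i0)⁻¹) := by
          have := wlen_mul_le hgen (Q i0) ((Q i0)⁻¹ * (g ^ (2 * k) * Q i0))
          omega
      _ ≤ 2 * i0 + wlen S ((Q i0)⁻¹ * (g ^ (2 * k) * Q i0)) := by
          rw [wlen_inv hgen, hwu]; omega
  have hF2ge : 2 * i0 + 2 * L0 ≤ F2 + 1 := by omega
  exact ⟨Q i0, by rw [hwu, hF]; omega, by omega, by omega⟩

variable {G : Type*} [Group G]

/-- the four-point inequality, in additive form. -/
lemma four_point {S : Set G} {δ : ℝ} (hgen : Subgroup.closure S = ⊤) (hδ : 0 ≤ δ)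
    (hhyp : GroupHyperbolic S δ) (w x u z : G) {i : ℕ}
    (h1 : 2 * i + wlen S (x⁻¹ * u) ≤ wlen S (w⁻¹ * x) + wlen S (w⁻¹ * u))
    (h2 : 2 * i + wlen S (u⁻¹ * z) ≤ wlen S (w⁻¹ * u) + wlen S (w⁻¹ * z)) :
    2 * i + wlen S (x⁻¹ * z) ≤ wlen S (w⁻¹ * x) + wlen S (w⁻¹ * z) + 2 * ⌊δ⌋₊ := by
  obtain ⟨p, hp⟩ := exists_geodesic hgen w x
  obtain ⟨q, hq⟩ := exists_geodesic hgen w u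
  obtain ⟨r, hr⟩ := exists_geodesic hgen w z
  have tri1 := wlen_triple hgen w x u
  have tri1' := wlen_triple hgen w u x
  have tri2 := wlen_triple hgen w z u
  have hvxu : wlen S (u⁻¹ * x) = wlen S (x⁻¹ * u) := by
    rw [← wlen_inv hgen (x⁻¹ * u)]; congr 1; group
  have hvzu : wlen S (z⁻¹ * u) = wlen S (u⁻¹ * z) := by
    rw [← wlen_inv hgen (u⁻¹ * z)]; congr 1; group
  have hix : i ≤ wlen S (w⁻¹ * x) := by omega
  have hiu : i ≤ wlen S (w⁻¹ * u) := by omega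
  have hiz : i ≤ wlen S (w⁻¹ * z) := by omega
  have t1 := thin hδ hhyp hp hq h1
  have t2 := thin hδ hhyp hq hr h2
  -- distance from x to p i
  obtain ⟨hp0, hpL, hpd⟩ := hp
  obtain ⟨hr0, hrL, hrd⟩ := hr
  have dpx : wlen S ((p i)⁻¹ * x) = wlen S (w⁻¹ * x) - i := by
    have := hpd i hix (wlen S (w⁻¹ * x)) (le_refl _)
    rw [hpL] at this
    rw [this, Nat.dist_eq_sub_of_le hix]
  have drz : wlen S ((r i)⁻¹ * z) = wlen S (w⁻¹ * z) - i := by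
    have := hrd i hiz (wlen S (w⁻¹ * z)) (le_refl _)
    rw [hrL] at this
    rw [this, Nat.dist_eq_sub_of_le hiz]
  -- chain of triangle inequalities
  have step1 : wlen S (x⁻¹ * z) ≤
      wlen S (x⁻¹ * p i) + wlen S ((p i)⁻¹ * q i) + wlen S ((q i)⁻¹ * z) := by
    have a1 := wlen_triple hgen x (p i) z
    have a2 := wlen_triple hgen (p i) (q i) z
    omega
  have step2 : wlen S ((q i)⁻¹ * z) ≤ wlen S ((q i)⁻¹ * r i) + wlen S ((r i)⁻¹ * z) :=
    wlen_triple hgen (q i) (r i) z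
  have hxp : wlen S (x⁻¹ * p i) = wlen S ((p i)⁻¹ * x) := by
    rw [← wlen_inv hgen (x⁻¹ * p i)]; congr 1; group
  omega

section Chain

variable {S : Set G} {δ : ℝ} {y : G}

lemma pow_diff_le (y : G) {a b : ℕ} (hab : a ≤ b) : (y ^ a)⁻¹ * y ^ b = y ^ (b - a) := by
  have : y ^ b = y ^ a * y ^ (b - a) := by rw [← pow_add]; congr 1; omega
  rw [this, inv_mul_cancel_left]

lemma wlen_pow_diff (hgen : Subgroup.closure S = ⊤) (y : G) (a b : ℕ) :
    wlen S ((y ^ a)⁻¹ * y ^ b) = wlen S (y ^ (b - a)) ∨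
    wlen S ((y ^ a)⁻¹ * y ^ b) = wlen S (y ^ (a - b)) := by
  rcases Nat.le_total a b with h | h
  · left; rw [pow_diff_le y h]
  · right
    rw [← wlen_inv hgen]
    congr 1
    rw [← pow_diff_le y h]
    group

/-- unit chain bound for a long straight element. -/
lemma chain_unit (hgen : Subgroup.closure S = ⊤) (hδ : 0 ≤ δ)
    (hhyp : GroupHyperbolic S δ)
    (hlong : 5 * ⌊δ⌋₊ + 6 ≤ wlen S y)
    (hgood : 2 * wlen S y ≤ wlen S (y ^ 2) + 2 * ⌊δ⌋₊ + 2) :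
    ∀ r : ℕ, wlen S (y ^ r) + wlen S y ≤ wlen S (y ^ (r + 1)) + (4 * ⌊δ⌋₊ + 4) := by
  intro r
  induction r with
  | zero => simp
  | succ r ih =>
      set D := ⌊δ⌋₊ with hD
      by_contra hcon
      push_neg at hcon
      rw [show r + 1 + 1 = r + 2 by omega] at hcon
      -- apply four-point at w = y^(r+1), x = y^r, u = 1, z = y^(r+2)
      set i : ℕ := 2 * D + 2 with hi
      have e1 : (y ^ (r + 1))⁻¹ * y ^ r = y⁻¹ := by
        rw [pow_succ]; group
      have e2 : (y ^ (r + 1))⁻¹ * (1 : G) = (y ^ (r + 1))⁻¹ := mul_one _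
      have e3 : (y ^ r)⁻¹ * (1 : G) = (y ^ r)⁻¹ := mul_one _
      have e4 : ((1 : G))⁻¹ * y ^ (r + 2) = y ^ (r + 2) := by group
      have e5 : (y ^ (r + 1))⁻¹ * y ^ (r + 2) = y := by
        rw [pow_diff_le y (by omega), show r + 2 - (r + 1) = 1 by omega, pow_one]
      have e6 : (y ^ r)⁻¹ * y ^ (r + 2) = y ^ 2 := by
        rw [pow_diff_le y (by omega), show r + 2 - r = 2 by omega]
      have h4 := four_point hgen hδ hhyp (y ^ (r + 1)) (y ^ r) (1 : G) (y ^ (r + 2))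
        (i := i) ?_ ?_
      · rw [e1, e5, e6, wlen_inv hgen] at h4
        omega
      · rw [e1, e2, e3, wlen_inv hgen, wlen_inv hgen, wlen_inv hgen]
        omega
      · rw [e2, e4, e5, wlen_inv hgen]
        omega

/-- bounded defect for powers of a long straight element. -/
lemma chain_defect (hgen : Subgroup.closure S = ⊤) (hδ : 0 ≤ δ)
    (hhyp : GroupHyperbolic S δ)
    (hlong : 5 * ⌊δ⌋₊ + 6 ≤ wlen S y)
    (hgood : 2 * wlen S y ≤ wlen S (y ^ 2) + 2 * ⌊δ⌋₊ + 2) :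
    ∀ s t : ℕ, wlen S (y ^ s) + wlen S (y ^ t) ≤ wlen S (y ^ (s + t)) + (6 * ⌊δ⌋₊ + 6) := by
  intro s t
  rcases Nat.eq_zero_or_pos t with rfl | ht
  · simp
  set D := ⌊δ⌋₊ with hD
  by_contra hcon
  push_neg at hcon
  set i : ℕ := 3 * D + 3 with hi
  have P : ∀ r : ℕ, wlen S (y ^ r) + wlen S y ≤ wlen S (y ^ (r + 1)) + (4 * D + 4) :=
    chain_unit hgen hδ hhyp hlong hgood
  have Ps := P s
  have Pt := P (t - 1)
  rw [show t - 1 + 1 = t by omega] at Pt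
  have e1 : (y ^ s)⁻¹ * y ^ (s + t) = y ^ t := by
    rw [pow_diff_le y (by omega)]; congr 1; omega
  have e2 : (y ^ s)⁻¹ * (1:G) = (y ^ s)⁻¹ := mul_one _
  have e3 : ((1:G))⁻¹ * y ^ (s + t) = y ^ (s + t) := by group
  have e4 : (y ^ (s + t))⁻¹ * y ^ (s + 1) = (y ^ (t - 1))⁻¹ := by
    have : (y ^ (s + 1))⁻¹ * y ^ (s + t) = y ^ (t - 1) := by
      rw [pow_diff_le y (by omega)]; congr 1; omega
    rw [← this]; group
  have e5 : (y ^ s)⁻¹ * y ^ (s + 1) = y := by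
    rw [pow_diff_le y (by omega), show s + 1 - s = 1 by omega, pow_one]
  have e6 : ((1:G))⁻¹ * y ^ (s + 1) = y ^ (s + 1) := by group
  have h4 := four_point hgen hδ hhyp (y ^ s) (1 : G) (y ^ (s + t)) (y ^ (s + 1))
    (i := i) ?_ ?_
  · rw [e2, e5, e6, wlen_inv hgen] at h4
    -- conclusion: 2i + wlen (y^(s+1)) ≤ wlen (y^s) + wlen y + 2D
    omega
  · rw [e2, e3, e1, wlen_inv hgen]
    omega
  · rw [e1, e4, e5, wlen_inv hgen]
    -- 2i + wlen (y^(t-1)) ≤ wlen (y^t) + wlen y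
    omega

end Chain

def muNat (D m n : ℕ) : ℕ := 10 * (M0const m D n * n) + 10 * D + 10

variable {G : Type*} [Group G]

lemma conj_pow_eq {u g : G} (k : ℕ) : ∀ r : ℕ,
    (u⁻¹ * (g ^ k * u)) ^ r = u⁻¹ * (g ^ (k * r) * u) := by
  intro r
  induction r with
  | zero => simp
  | succ r ih =>
      rw [pow_succ, ih, show k * (r + 1) = k * r + k by ring, pow_add]
      group

/-- the main quantitative bound. -/
theorem main_bound {S : Set G} {δ : ℝ} {g : G} (hfin : S.Finite)
    (hgen : Subgroup.closure S = ⊤) (hδ : 0 ≤ δ) (hhyp : GroupHyperbolic S δ)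
    (hg : ¬ IsOfFinOrder g) (s t : ℕ) :
    wlen S (g ^ s) + wlen S (g ^ t) ≤
      wlen S (g ^ (s + t)) + 2 * muNat ⌊δ⌋₊ S.ncard (wlen S g) := by
  obtain ⟨k0, hk01, hk0M, hk0v⟩ := exists_doubling_violation hfin hgen hδ hhyp hg
  obtain ⟨u, hulen, hylong, hygood⟩ := extractor hgen hδ hhyp hk0v
  set y := u⁻¹ * (g ^ k0 * u) with hy
  have hy2 : y ^ 2 = u⁻¹ * (g ^ (2 * k0) * u) := by
    rw [hy, conj_pow_eq k0 2, show k0 * 2 = 2 * k0 by ring]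
  have hchain := chain_defect hgen hδ hhyp (y := y)
    (by omega) (by rw [hy2]; exact hygood)
  have hmuN : muNat ⌊δ⌋₊ S.ncard (wlen S g) =
      10 * (M0const S.ncard ⌊δ⌋₊ (wlen S g) * wlen S g) + 10 * ⌊δ⌋₊ + 10 := rfl
  have hfk0n : wlen S (g ^ k0) ≤ M0const S.ncard ⌊δ⌋₊ (wlen S g) * wlen S g := by
    calc wlen S (g ^ k0) ≤ k0 * wlen S g := wlen_pow_le hgen g k0
      _ ≤ M0const S.ncard ⌊δ⌋₊ (wlen S g) * wlen S g :=
          Nat.mul_le_mul_right _ hk0M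
  have htrans1 : ∀ r : ℕ, wlen S (g ^ (k0 * r)) ≤ wlen S (y ^ r) + 2 * wlen S (g ^ k0) := by
    intro r
    have e : g ^ (k0 * r) = u * y ^ r * u⁻¹ := by
      rw [hy, conj_pow_eq k0 r]; group
    calc wlen S (g ^ (k0 * r)) ≤ wlen S (u * y ^ r) + wlen S u⁻¹ := by
          rw [e]; exact wlen_mul_le hgen _ _
      _ ≤ wlen S u + wlen S (y ^ r) + wlen S u⁻¹ := by
          have := wlen_mul_le hgen u (y ^ r)
          omega
      _ ≤ wlen S (y ^ r) + 2 * wlen S (g ^ k0) := by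
          rw [wlen_inv hgen]
          omega
  have htrans2 : ∀ r : ℕ, wlen S (y ^ r) ≤ wlen S (g ^ (k0 * r)) + 2 * wlen S (g ^ k0) := by
    intro r
    have e : y ^ r = u⁻¹ * (g ^ (k0 * r) * u) := by rw [hy, conj_pow_eq k0 r]
    calc wlen S (y ^ r) ≤ wlen S (u⁻¹ * g ^ (k0 * r)) + wlen S u := by
          rw [e, ← mul_assoc]; exact wlen_mul_le hgen _ _
      _ ≤ wlen S u⁻¹ + wlen S (g ^ (k0 * r)) + wlen S u := by
          have := wlen_mul_le hgen u⁻¹ (g ^ (k0 * r))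
          omega
      _ ≤ wlen S (g ^ (k0 * r)) + 2 * wlen S (g ^ k0) := by
          rw [wlen_inv hgen]
          omega
  -- small cases
  rcases Nat.lt_or_ge s k0 with hs | hs
  · have h1 : wlen S (g ^ s) ≤ M0const S.ncard ⌊δ⌋₊ (wlen S g) * wlen S g := by
      calc wlen S (g ^ s) ≤ s * wlen S g := wlen_pow_le hgen g s
        _ ≤ M0const S.ncard ⌊δ⌋₊ (wlen S g) * wlen S g :=
            Nat.mul_le_mul_right _ (by omega)
    have h2 : wlen S (g ^ t) ≤ wlen S (g ^ s) + wlen S (g ^ (s + t)) :=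
      wlen_shift_ge hgen g s t
    omega
  rcases Nat.lt_or_ge t k0 with ht | ht
  · have h1 : wlen S (g ^ t) ≤ M0const S.ncard ⌊δ⌋₊ (wlen S g) * wlen S g := by
      calc wlen S (g ^ t) ≤ t * wlen S g := wlen_pow_le hgen g t
        _ ≤ M0const S.ncard ⌊δ⌋₊ (wlen S g) * wlen S g :=
            Nat.mul_le_mul_right _ (by omega)
    have h2 : wlen S (g ^ s) ≤ wlen S (g ^ t) + wlen S (g ^ (t + s)) :=
      wlen_shift_ge hgen g t s
    rw [show t + s = s + t by ring] at h2
    omega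
  -- main case
  have hsd : s = k0 * (s / k0) + s % k0 := (Nat.div_add_mod s k0).symm
  have htd : t = k0 * (t / k0) + t % k0 := (Nat.div_add_mod t k0).symm
  have ha'k : s % k0 < k0 := Nat.mod_lt s (by omega)
  have hb'k : t % k0 < k0 := Nat.mod_lt t (by omega)
  have hra : wlen S (g ^ (s % k0)) ≤ M0const S.ncard ⌊δ⌋₊ (wlen S g) * wlen S g := by
    calc wlen S (g ^ (s % k0)) ≤ (s % k0) * wlen S g := wlen_pow_le hgen g _
      _ ≤ M0const S.ncard ⌊δ⌋₊ (wlen S g) * wlen S g :=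
          Nat.mul_le_mul_right _ (by omega)
  have hrb : wlen S (g ^ (t % k0)) ≤ M0const S.ncard ⌊δ⌋₊ (wlen S g) * wlen S g := by
    calc wlen S (g ^ (t % k0)) ≤ (t % k0) * wlen S g := wlen_pow_le hgen g _
      _ ≤ M0const S.ncard ⌊δ⌋₊ (wlen S g) * wlen S g :=
          Nat.mul_le_mul_right _ (by omega)
  have hrab : wlen S (g ^ (s % k0 + t % k0)) ≤
      2 * (M0const S.ncard ⌊δ⌋₊ (wlen S g) * wlen S g) := by
    calc wlen S (g ^ (s % k0 + t % k0)) ≤ (s % k0 + t % k0) * wlen S g :=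
          wlen_pow_le hgen g _
      _ ≤ (2 * M0const S.ncard ⌊δ⌋₊ (wlen S g)) * wlen S g :=
          Nat.mul_le_mul_right _ (by omega)
      _ = 2 * (M0const S.ncard ⌊δ⌋₊ (wlen S g) * wlen S g) := by ring
  have hds : wlen S (g ^ s) ≤ wlen S (g ^ (k0 * (s / k0))) + wlen S (g ^ (s % k0)) := by
    conv_lhs => rw [hsd]
    rw [pow_add]
    exact wlen_mul_le hgen _ _
  have hdt : wlen S (g ^ t) ≤ wlen S (g ^ (k0 * (t / k0))) + wlen S (g ^ (t % k0)) := by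
    conv_lhs => rw [htd]
    rw [pow_add]
    exact wlen_mul_le hgen _ _
  have hdst : wlen S (g ^ (k0 * (s / k0 + t / k0))) ≤
      wlen S (g ^ (s % k0 + t % k0)) + wlen S (g ^ (s + t)) := by
    have e : (s % k0 + t % k0) + k0 * (s / k0 + t / k0) = s + t := by
      conv_rhs => rw [hsd, htd]
      ring
    have h9 := wlen_shift_ge hgen g (s % k0 + t % k0) (k0 * (s / k0 + t / k0))
    rw [e] at h9
    exact h9
  have hc1 := htrans1 (s / k0)
  have hc2 := htrans1 (t / k0)
  have hc3 := htrans2 (s / k0 + t / k0)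
  have hch := hchain (s / k0) (t / k0)
  omega

end Stmt7

/-- (Corollary 2.15 of the paper.)  For `g` of infinite order there is
`μ = μ(δ, ♯S, |g|) ≥ 0` with `|g^{s+t}| ≥ |g^s| + |g^t| - 2μ` for all `s, t : ℕ`. -/
theorem stmt7 :
    ∃ μ : ℝ → ℕ → ℕ → ℝ,
      (∀ δ m n, 0 ≤ μ δ m n) ∧
      ∀ (H : Type) [Group H] (S : Set H) (δ : ℝ),
        S.Finite → Subgroup.closure S = ⊤ → 0 ≤ δ → GroupHyperbolic S δ →
        ∀ g : H, ¬ IsOfFinOrder g →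
          ∀ s t : ℕ,
            (wlen S (g ^ (s + t)) : ℝ) ≥
              (wlen S (g ^ s) : ℝ) + (wlen S (g ^ t) : ℝ)
                - 2 * μ δ S.ncard (wlen S g) := by
  classical
  refine ⟨fun d m n => ((Stmt7.muNat ⌊d⌋₊ m n : ℕ) : ℝ), ?_, ?_⟩
  · intro δ m n
    exact Nat.cast_nonneg _
  · intro H _ S δ hfin hgen hδ hhyp g hg s t
    have h := Stmt7.main_bound hfin hgen hδ hhyp hg s t
    have h' : (wlen S (g ^ s) : ℝ) + (wlen S (g ^ t) : ℝ) ≤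
        (wlen S (g ^ (s + t)) : ℝ) + 2 * ((Stmt7.muNat ⌊δ⌋₊ S.ncard (wlen S g) : ℕ) : ℝ) := by
      exact_mod_cast h
    simp only []
    linarith
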